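/- Let $G$ be a (possibly disconnected) reductive algebraic group over an algebraically closed field $k$ of characteristic $0$, let $G^0$ be its identity component and $Z(G^0)^0$ the identity component of the centre of $G^0$. Let $\mu: G \to \mathbb{G}_m$ be a character of $G$ whose restriction to $Z(G^0)^0$ is non-trivial. Then the restriction of $\mu$ to the identity component $Z(G)^0$ of the centre of $G$ is non-trivial. -/

import Mathlib

open Matrix MvPolynomial

variable (k : Type) [Field k]

/-- The Zariski topology on affine space `ι → k`: generated by the complements of
zero sets of polynomials. -/
def zariskiTopology (ι : Type) [Fintype ι] : TopologicalSpace (ι → k) :=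
  TopologicalSpace.generateFrom
    {U | ∃ f : MvPolynomial ι k, U = {x | MvPolynomial.eval x f ≠ 0}}

/-- The embedding of `GL_n(k)` into affine space via the matrix entries and the
determinant of the inverse. -/
def glEmbedding (n : ℕ) (g : GL (Fin n) k) : ((Fin n × Fin n) ⊕ Unit) → k :=
  Sum.elim (fun q => (g : Matrix (Fin n) (Fin n) k) q.1 q.2)
    (fun _ => ((↑(g⁻¹) : Matrix (Fin n) (Fin n) k)).det)

/-- The Zariski topology on `GL_n(k)` (as a closed subvariety of affine
`(n² + 1)`-space). -/
instance glZariskiTopology (n : ℕ) : TopologicalSpace (GL (Fin n) k) :=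
  TopologicalSpace.induced (glEmbedding k n) (zariskiTopology k _)

/-- The identity component of a subset of `GL_n(k)` (for the Zariski topology). -/
def idComponent {n : ℕ} (s : Set (GL (Fin n) k)) : Set (GL (Fin n) k) :=
  {g | ∃ (hg : g ∈ s) (h1 : (1 : GL (Fin n) k) ∈ s),
    (⟨g, hg⟩ : s) ∈ connectedComponent (⟨1, h1⟩ : s)}

/-- The centralizer of a subset of `GL_n(k)` inside itself. -/
def centerOf {n : ℕ} (s : Set (GL (Fin n) k)) : Set (GL (Fin n) k) :=
  {g | g ∈ s ∧ ∀ h ∈ s, g * h = h * g}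

/-- A unipotent element of `GL_n(k)`. -/
def IsUnipotentElt {n : ℕ} (g : GL (Fin n) k) : Prop :=
  ((g : Matrix (Fin n) (Fin n) k) - 1) ^ n = 0

/-- A (possibly disconnected) Zariski-closed subgroup of `GL_n(k)` is reductive if
its only Zariski-closed connected normal subgroup all of whose elements are
unipotent is the trivial one (unipotent radical is trivial; char 0). -/
def IsReductiveSubgroup {n : ℕ} (G : Subgroup (GL (Fin n) k)) : Prop :=
  ∀ N : Subgroup (GL (Fin n) k), (N : Set (GL (Fin n) k)) ⊆ G →
    IsClosed (N : Set (GL (Fin n) k)) →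
    (∀ g ∈ G, ∀ x ∈ N, g * x * g⁻¹ ∈ N) →
    IsPreconnected (N : Set (GL (Fin n) k)) →
    (∀ x ∈ N, IsUnipotentElt k x) → N = ⊥

/-- An algebraic character of a closed subgroup `G ≤ GL_n(k)`: a homomorphism
`G → k^×` given on `G` by a polynomial in the matrix entries divided by a power of
the determinant. -/
def IsAlgebraicCharacter {n : ℕ} (G : Subgroup (GL (Fin n) k))
    (μ : GL (Fin n) k → kˣ) : Prop :=
  (∀ g ∈ G, ∀ h ∈ G, μ (g * h) = μ g * μ h) ∧
  ∃ (f : MvPolynomial (Fin n × Fin n) k) (m : ℕ),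
    ∀ g ∈ G, ((μ g : kˣ) : k) * ((g : Matrix (Fin n) (Fin n) k).det) ^ m =
      MvPolynomial.eval (fun q => (g : Matrix (Fin n) (Fin n) k) q.1 q.2) f

section Aux
open Topology TopologicalSpace Set

variable {k}

theorem zariski_isOpen_basic {ι : Type} [Fintype ι] (f : MvPolynomial ι k) :
    IsOpen[zariskiTopology k ι] {x | eval x f ≠ 0} :=
  isOpen_generateFrom_of_mem ⟨f, rfl⟩

theorem zariski_isClosed_basic {ι : Type} [Fintype ι] (f : MvPolynomial ι k) :
    IsClosed[zariskiTopology k ι] {x | eval x f = 0} := by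
  letI := zariskiTopology k ι
  have h : {x : ι → k | eval x f = 0} = {x | eval x f ≠ 0}ᶜ := by
    ext x; simp
  rw [h]
  exact (zariski_isOpen_basic f).isClosed_compl

theorem zariski_continuous_of_poly {ι κ : Type} [Fintype ι] [Fintype κ]
    {F : (ι → k) → κ → k} (p : κ → MvPolynomial ι k)
    (hF : ∀ x j, F x j = eval x (p j)) :
    Continuous[zariskiTopology k ι, zariskiTopology k κ] F := by
  rw [zariskiTopology.eq_1 k κ, continuous_generateFrom_iff]
  rintro U ⟨f, rfl⟩
  have key : ∀ x : ι → k, eval (F x) f = eval x (eval₂ C p f) := by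
    intro x
    rw [eval_eval₂]
    have : (eval x).comp C = RingHom.id k := by
      ext c; simp
    rw [this]
    have : F x = fun j => eval x (p j) := funext (hF x)
    rw [eval₂_id, this]
  have : F ⁻¹' {x | eval x f ≠ 0} = {x | eval x (eval₂ C p f) ≠ 0} := by
    ext x
    simp only [Set.mem_preimage, Set.mem_setOf_eq, key x]
  rw [this]
  exact zariski_isOpen_basic _

def IsGLPolyMap {n : ℕ} (φ : GL (Fin n) k → GL (Fin n) k) : Prop :=
  ∃ P : ((Fin n × Fin n) ⊕ Unit) → MvPolynomial ((Fin n × Fin n) ⊕ Unit) k,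
    ∀ g j, glEmbedding k n (φ g) j = eval (glEmbedding k n g) (P j)

theorem IsGLPolyMap.continuous {n : ℕ} {φ : GL (Fin n) k → GL (Fin n) k}
    (h : IsGLPolyMap φ) : Continuous φ := by
  obtain ⟨P, hP⟩ := h
  letI := zariskiTopology k ((Fin n × Fin n) ⊕ Unit)
  refine continuous_induced_rng.mpr ?_
  have : glEmbedding k n ∘ φ = (fun x (j : (Fin n × Fin n) ⊕ Unit) => eval x (P j)) ∘
      glEmbedding k n := by
    funext g; funext j; exact hP g j
  rw [this]
  exact (zariski_continuous_of_poly P (fun x j => rfl)).comp continuous_induced_dom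

theorem isGLPolyMap_const {n : ℕ} (c : GL (Fin n) k) : IsGLPolyMap (fun _ => c) :=
  ⟨fun j => C (glEmbedding k n c j), by intro g j; simp⟩

theorem isGLPolyMap_id {n : ℕ} : IsGLPolyMap (fun g : GL (Fin n) k => g) :=
  ⟨fun j => X j, by intro g j; simp⟩

theorem IsGLPolyMap.mul {n : ℕ} {φ ψ : GL (Fin n) k → GL (Fin n) k}
    (hφ : IsGLPolyMap φ) (hψ : IsGLPolyMap ψ) : IsGLPolyMap (fun g => φ g * ψ g) := by
  obtain ⟨P, hP⟩ := hφ; obtain ⟨Q, hQ⟩ := hψ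
  refine ⟨Sum.elim (fun q => ∑ p : Fin n, P (Sum.inl (q.1, p)) * Q (Sum.inl (p, q.2)))
    (fun _ => Q (Sum.inr ()) * P (Sum.inr ())), ?_⟩
  intro g j
  cases j with
  | inl q =>
    have lhs : glEmbedding k n (φ g * ψ g) (Sum.inl q) =
        ∑ p : Fin n, glEmbedding k n (φ g) (Sum.inl (q.1, p)) *
          glEmbedding k n (ψ g) (Sum.inl (p, q.2)) := by
      simp [glEmbedding, Units.val_mul, Matrix.mul_apply]
    rw [lhs]
    simp only [hP, hQ, Sum.elim_inl, map_sum, _root_.map_mul]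
  | inr u =>
    have lhs : glEmbedding k n (φ g * ψ g) (Sum.inr u) =
        glEmbedding k n (ψ g) (Sum.inr ()) * glEmbedding k n (φ g) (Sum.inr ()) := by
      simp [glEmbedding, _root_.mul_inv_rev, Units.val_mul, Matrix.det_mul]
    rw [lhs]
    simp only [hP, hQ, Sum.elim_inr, _root_.map_mul]

theorem isGLPolyMap_listConjProd {n : ℕ} (l : List (GL (Fin n) k)) :
    IsGLPolyMap (fun z => (l.map (fun g => g * z * g⁻¹)).prod) := by
  induction l with
  | nil => simpa using isGLPolyMap_const (1 : GL (Fin n) k)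
  | cons a t ih =>
    have h := (((isGLPolyMap_const a).mul isGLPolyMap_id).mul (isGLPolyMap_const a⁻¹)).mul ih
    simpa using h


theorem zariski_open_exists {ι : Type} [Fintype ι] {U : Set (ι → k)}
    (hU : IsOpen[zariskiTopology k ι] U) :
    ∀ x ∈ U, ∃ f : MvPolynomial ι k, eval x f ≠ 0 ∧ ∀ y, eval y f ≠ 0 → y ∈ U := by
  have hU' : TopologicalSpace.GenerateOpen
      {U : Set (ι → k) | ∃ f : MvPolynomial ι k, U = {x | eval x f ≠ 0}} U := hU
  clear hU
  induction hU' with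
  | basic s hs =>
    obtain ⟨f, rfl⟩ := hs
    exact fun x hx => ⟨f, hx, fun y hy => hy⟩
  | univ => exact fun x _ => ⟨1, by simp, fun y _ => trivial⟩
  | inter U V hu hv ihu ihv =>
    rintro x ⟨hxU, hxV⟩
    obtain ⟨f, hf1, hf2⟩ := ihu x hxU
    obtain ⟨g, hg1, hg2⟩ := ihv x hxV
    refine ⟨f * g, by simp only [_root_.map_mul]; exact mul_ne_zero hf1 hg1, fun y hy => ?_⟩
    rw [_root_.map_mul, mul_ne_zero_iff] at hy
    exact ⟨hf2 y hy.1, hg2 y hy.2⟩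
  | sUnion S hS ih =>
    rintro x ⟨t, htS, hxt⟩
    obtain ⟨f, hf1, hf2⟩ := ih t htS x hxt
    exact ⟨f, hf1, fun y hy => ⟨t, htS, hf2 y hy⟩⟩

theorem zariski_closed_eq_zeroLocus {ι : Type} [Fintype ι] {Z : Set (ι → k)}
    (hZ : IsClosed[zariskiTopology k ι] Z) :
    Z = MvPolynomial.zeroLocus k (MvPolynomial.vanishingIdeal k Z) := by
  letI := zariskiTopology k ι
  refine Set.Subset.antisymm (MvPolynomial.zeroLocus_vanishingIdeal_le Z) ?_
  intro x hx
  by_contra hxZ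
  obtain ⟨f, hf1, hf2⟩ := zariski_open_exists hZ.isOpen_compl x hxZ
  have hfv : f ∈ MvPolynomial.vanishingIdeal k Z := by
    rw [MvPolynomial.mem_vanishingIdeal_iff]
    intro y hy
    by_contra h
    exact hf2 y h hy
  exact hf1 (hx f hfv)

theorem zariski_noetherianSpace (ι : Type) [Fintype ι] :
    @TopologicalSpace.NoetherianSpace (ι → k) (zariskiTopology k ι) := by
  letI := zariskiTopology k ι
  haveI wfI : WellFoundedGT (Ideal (MvPolynomial ι k)) :=
    isNoetherian_iff'.mp (inferInstance : IsNoetherianRing (MvPolynomial ι k))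
  refine StrictMono.wellFoundedGT
    (f := fun U : TopologicalSpace.Opens (ι → k) =>
      MvPolynomial.vanishingIdeal k ((U : Set (ι → k))ᶜ)) ?_
  intro U V hUV
  refine lt_of_le_of_ne
    (MvPolynomial.vanishingIdeal_anti_mono (Set.compl_subset_compl.mpr hUV.le)) ?_
  intro he
  have hU : ((U : Set (ι → k))ᶜ) = MvPolynomial.zeroLocus k
      (MvPolynomial.vanishingIdeal k ((U : Set (ι → k))ᶜ)) :=
    zariski_closed_eq_zeroLocus U.2.isClosed_compl
  have hV : ((V : Set (ι → k))ᶜ) = MvPolynomial.zeroLocus k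
      (MvPolynomial.vanishingIdeal k ((V : Set (ι → k))ᶜ)) :=
    zariski_closed_eq_zeroLocus V.2.isClosed_compl
  have he' : MvPolynomial.vanishingIdeal k ((U : Set (ι → k))ᶜ) =
      MvPolynomial.vanishingIdeal k ((V : Set (ι → k))ᶜ) := he
  have : ((U : Set (ι → k))ᶜ) = ((V : Set (ι → k))ᶜ) := by rw [hU, hV, he']
  have : (U : Set (ι → k)) = (V : Set (ι → k)) := by
    rw [← compl_compl (U : Set (ι → k)), this, compl_compl]
  exact hUV.ne (TopologicalSpace.Opens.ext this)

instance glNoetherian (n : ℕ) : TopologicalSpace.NoetherianSpace (GL (Fin n) k) := by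
  letI := zariskiTopology k ((Fin n × Fin n) ⊕ Unit)
  haveI := zariski_noetherianSpace (k := k) ((Fin n × Fin n) ⊕ Unit)
  exact Topology.IsInducing.noetherianSpace ⟨rfl⟩

theorem finite_connectedComponents_of_noetherian {α : Type} [TopologicalSpace α]
    [TopologicalSpace.NoetherianSpace α] : Finite (ConnectedComponents α) := by
  classical
  have h := TopologicalSpace.NoetherianSpace.finite_irreducibleComponents (α := α)
  haveI := h.to_subtype
  refine Finite.of_surjective
    (fun t : irreducibleComponents α => (ConnectedComponents.mk
      (t.2.1.1.some : α))) ?_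
  intro c
  obtain ⟨x, rfl⟩ := ConnectedComponents.surjective_coe c
  refine ⟨⟨irreducibleComponent x, irreducibleComponent_mem_irreducibleComponents x⟩, ?_⟩
  have hirr : IsIrreducible (irreducibleComponent x) := isIrreducible_irreducibleComponent
  have hpc : IsPreconnected (irreducibleComponent x) := hirr.2.isPreconnected
  have hsome : hirr.1.some ∈ irreducibleComponent x := hirr.1.some_mem
  have hx : x ∈ irreducibleComponent x := mem_irreducibleComponent
  have := hpc.subset_connectedComponent hx hsome
  exact ConnectedComponents.coe_eq_coe'.mpr this

theorem component_map {n : ℕ} {s t : Set (GL (Fin n) k)} {φ : GL (Fin n) k → GL (Fin n) k}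
    (hφ : Continuous φ) (hst : ∀ a ∈ s, φ a ∈ t) {x y : GL (Fin n) k}
    (hx : x ∈ s) (hy : y ∈ s)
    (h : (⟨x, hx⟩ : s) ∈ connectedComponent (⟨y, hy⟩ : s)) :
    (⟨φ x, hst x hx⟩ : t) ∈ connectedComponent (⟨φ y, hst y hy⟩ : t) := by
  let ψ : s → t := fun a => ⟨φ a, hst a a.2⟩
  have hψ : Continuous ψ :=
    Continuous.subtype_mk (hφ.comp continuous_subtype_val) _
  have key := hψ.image_connectedComponent_subset ⟨y, hy⟩
  exact key ⟨⟨x, hx⟩, h, rfl⟩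

theorem component_map' {n : ℕ} {s t : Set (GL (Fin n) k)} {φ : GL (Fin n) k → GL (Fin n) k}
    (hφ : Continuous φ) (hst : ∀ a ∈ s, φ a ∈ t) {x y : GL (Fin n) k}
    (hx : x ∈ s) (hy : y ∈ s)
    (h : (⟨x, hx⟩ : s) ∈ connectedComponent (⟨y, hy⟩ : s))
    {x' y' : GL (Fin n) k} (ex : φ x = x') (ey : φ y = y')
    (hx' : x' ∈ t) (hy' : y' ∈ t) :
    (⟨x', hx'⟩ : t) ∈ connectedComponent (⟨y', hy'⟩ : t) := by
  subst ex; subst ey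
  exact component_map hφ hst hx hy h

theorem hconj_list {n : ℕ} (lw : List (GL (Fin n) k)) (h : GL (Fin n) k) :
    h * lw.prod * h⁻¹ = (lw.map (fun w => h * w * h⁻¹)).prod := by
  induction lw with
  | nil => simp
  | cons a t ih =>
    rw [List.prod_cons, List.map_cons, List.prod_cons, ← ih]
    group

/-- The determinant as a polynomial in the matrix-entry variables. -/
noncomputable def detPoly (n : ℕ) : MvPolynomial ((Fin n × Fin n) ⊕ Unit) k :=
  (Matrix.of fun i j : Fin n =>
    (X (Sum.inl (i, j)) : MvPolynomial ((Fin n × Fin n) ⊕ Unit) k)).det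

theorem detPoly_eval {n : ℕ} (g : GL (Fin n) k) :
    eval (glEmbedding k n g) (detPoly n) = ((g : Matrix (Fin n) (Fin n) k)).det := by
  rw [detPoly, RingHom.map_det]
  congr 1
  ext i j
  simp [Matrix.map_apply, glEmbedding]

end Aux

/-- **Characters nontrivial on `Z(G⁰)⁰` are nontrivial on `Z(G)⁰`.**  Let `G` be a
(possibly disconnected) reductive algebraic group over an algebraically closed
field `k` of characteristic `0` (realized as a Zariski-closed subgroup of some
`GL_n(k)`), and let `μ` be a character of `G` whose restriction to the identity
component of the centre of `G⁰` is nontrivial.  Then the restriction of `μ` to the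
identity component of the centre of `G` is nontrivial. -/
theorem character_nontrivial_on_connected_center
    [IsAlgClosed k] [CharZero k] (n : ℕ)
    (G : Subgroup (GL (Fin n) k))
    (hclosed : IsClosed (G : Set (GL (Fin n) k)))
    (hred : IsReductiveSubgroup k G)
    (μ : GL (Fin n) k → kˣ) (hμ : IsAlgebraicCharacter k G μ)
    (hnontriv : ∃ z ∈ idComponent k
        (centerOf k (idComponent k (G : Set (GL (Fin n) k)))), μ z ≠ 1) :
    ∃ z ∈ idComponent k (centerOf k (G : Set (GL (Fin n) k))), μ z ≠ 1 := by
  classical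
  obtain ⟨hmul, f, m, hf⟩ := hμ
  by_contra hcontra
  push_neg at hcontra
  obtain ⟨z₀, hz₀, hz₀ne⟩ := hnontriv
  -- basic facts about μ
  have hμ1 : μ 1 = 1 := by
    have h := hmul 1 G.one_mem 1 G.one_mem
    rw [mul_one] at h
    exact (left_eq_mul.mp h)
  have hμinv : ∀ g ∈ G, μ g⁻¹ = (μ g)⁻¹ := by
    intro g hg
    have h := hmul g hg g⁻¹ (inv_mem hg)
    rw [mul_inv_cancel, hμ1] at h
    exact (inv_eq_of_mul_eq_one_right h.symm).symm
  have hμconj : ∀ g ∈ G, ∀ x ∈ G, μ (g * x * g⁻¹) = μ x := by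
    intro g hg x hx
    rw [hmul _ (mul_mem hg hx) _ (inv_mem hg), hmul g hg x hx, hμinv g hg,
      mul_comm (μ g) (μ x), mul_assoc, mul_inv_cancel, mul_one]
  -- notation
  set S : Set (GL (Fin n) k) := (G : Set (GL (Fin n) k)) with hSdef
  have h1S : (1 : GL (Fin n) k) ∈ S := G.one_mem
  have h1G0 : (1 : GL (Fin n) k) ∈ idComponent k S := ⟨h1S, h1S, mem_connectedComponent⟩
  have hG0S : idComponent k S ⊆ S := by
    intro x hx; obtain ⟨h, -, -⟩ := hx; exact h
  have hconjS : ∀ g ∈ G, ∀ x ∈ S, g * x * g⁻¹ ∈ S := fun g hg x hx =>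
    mul_mem (mul_mem hg hx) (inv_mem hg)
  have hmulpoly : ∀ a b : GL (Fin n) k, IsGLPolyMap (fun x => a * x * b) := fun a b =>
    ((isGLPolyMap_const a).mul isGLPolyMap_id).mul (isGLPolyMap_const b)
  have hlpoly : ∀ a : GL (Fin n) k, IsGLPolyMap (fun x => a * x) := fun a =>
    (isGLPolyMap_const a).mul isGLPolyMap_id
  have hconjG0 : ∀ g ∈ G, ∀ x ∈ idComponent k S, g * x * g⁻¹ ∈ idComponent k S := by
    intro g hg x hx
    obtain ⟨hxS, h1, hc⟩ := hx
    refine ⟨hconjS g hg x hxS, h1S, ?_⟩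
    exact component_map' (hmulpoly g g⁻¹).continuous (fun b hb => hconjS g hg b hb)
      hxS h1 hc rfl (by group) _ h1S
  -- the center of G⁰
  have h1s2 : (1 : GL (Fin n) k) ∈ centerOf k (idComponent k S) :=
    ⟨h1G0, fun h _ => by rw [one_mul, mul_one]⟩
  have h1ct : (1 : GL (Fin n) k) ∈ centerOf k S :=
    ⟨h1S, fun h _ => by rw [one_mul, mul_one]⟩
  have hconjZ : ∀ g ∈ G, ∀ z ∈ centerOf k (idComponent k S),
      g * z * g⁻¹ ∈ centerOf k (idComponent k S) := by
    intro g hg z hz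
    refine ⟨hconjG0 g hg z hz.1, ?_⟩
    intro u hu
    have hu' : g⁻¹ * u * g ∈ idComponent k S := by
      have h2 := hconjG0 g⁻¹ (inv_mem hg) u hu
      rwa [inv_inv] at h2
    have hcomm := hz.2 _ hu'
    calc (g * z * g⁻¹) * u = g * (z * (g⁻¹ * u * g)) * g⁻¹ := by group
      _ = g * ((g⁻¹ * u * g) * z) * g⁻¹ := by rw [hcomm]
      _ = u * (g * z * g⁻¹) := by group
  -- connected components of G
  haveI : Finite (ConnectedComponents (↥S)) := finite_connectedComponents_of_noetherian
  haveI : Fintype (ConnectedComponents (↥S)) := Fintype.ofFinite _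
  haveI : Nonempty (ConnectedComponents (↥S)) := ⟨ConnectedComponents.mk ⟨1, h1S⟩⟩
  have mkQsurj : Function.Surjective
      (ConnectedComponents.mk : ↥S → ConnectedComponents (↥S)) :=
    ConnectedComponents.surjective_coe
  set r : ConnectedComponents (↥S) → ↥S := Function.surjInv mkQsurj with hrdef
  have hrmk : ∀ c, ConnectedComponents.mk (r c) = c := fun c =>
    Function.surjInv_eq mkQsurj c
  set rv : ConnectedComponents (↥S) → GL (Fin n) k := fun c => ↑(r c) with hrvdef
  have hrvS : ∀ c, rv c ∈ G := fun c => (r c).2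
  -- conjugation by an element depends only on its connected component
  have hconjcomp : ∀ z ∈ centerOf k (idComponent k S), ∀ x y : ↥S,
      ConnectedComponents.mk x = ConnectedComponents.mk y →
      (↑x : GL (Fin n) k) * z * (↑x)⁻¹ = ↑y * z * (↑y)⁻¹ := by
    intro z hz x y hxy
    have hmem : x ∈ connectedComponent y := ConnectedComponents.coe_eq_coe'.mp hxy
    have hu : ((↑x : GL (Fin n) k) * (↑y : GL (Fin n) k)⁻¹) ∈ idComponent k S := by
      refine ⟨mul_mem x.2 (inv_mem y.2), h1S, ?_⟩
      exact component_map' ((isGLPolyMap_id).mul (isGLPolyMap_const (↑y)⁻¹)).continuous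
        (fun b hb => mul_mem hb (inv_mem y.2)) x.2 y.2 hmem rfl (by group) _ h1S
    have hyzy : (↑y : GL (Fin n) k) * z * (↑y)⁻¹ ∈ centerOf k (idComponent k S) :=
      hconjZ ↑y y.2 z hz
    have hcomm := hyzy.2 _ hu
    calc (↑x : GL (Fin n) k) * z * (↑x)⁻¹
        = ((↑x : GL (Fin n) k) * (↑y)⁻¹) * ((↑y : GL (Fin n) k) * z * (↑y)⁻¹) *
          ((↑x : GL (Fin n) k) * (↑y)⁻¹)⁻¹ := by group
      _ = (↑y : GL (Fin n) k) * z * (↑y)⁻¹ := by rw [← hcomm]; group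
  -- descent of left translation to components
  have hdesc : ∀ a ∈ G, ∀ x y : ↥S,
      ConnectedComponents.mk x = ConnectedComponents.mk y →
      ∀ (hx' : a * ↑x ∈ S) (hy' : a * ↑y ∈ S),
      ConnectedComponents.mk (⟨a * ↑x, hx'⟩ : ↥S) = ConnectedComponents.mk ⟨a * ↑y, hy'⟩ := by
    intro a ha x y hxy hx' hy'
    have hmem : x ∈ connectedComponent y := ConnectedComponents.coe_eq_coe'.mp hxy
    refine ConnectedComponents.coe_eq_coe'.mpr ?_
    exact component_map' (hlpoly a).continuous (fun b hb => mul_mem ha hb) x.2 y.2 hmem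
      rfl rfl hx' hy'
  -- the averaging map Φ
  set Lq : List (ConnectedComponents (↥S)) := Finset.univ.toList with hLqdef
  set L : List (GL (Fin n) k) := Lq.map rv with hLdef
  have hLmemG : ∀ g ∈ L, g ∈ G := by
    intro g hg
    rw [hLdef, List.mem_map] at hg
    obtain ⟨c, -, rfl⟩ := hg
    exact hrvS c
  set Φ : GL (Fin n) k → GL (Fin n) k :=
    fun z => (L.map (fun g => g * z * g⁻¹)).prod with hΦdef
  have hΦcont : Continuous Φ := (isGLPolyMap_listConjProd L).continuous
  have hΦ1 : Φ 1 = 1 := by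
    show (L.map (fun g => g * 1 * g⁻¹)).prod = 1
    apply List.prod_eq_one
    intro a ha
    rw [List.mem_map] at ha
    obtain ⟨g, -, rfl⟩ := ha
    group
  -- products of conjugates
  have hprod_memG : ∀ (l : List (GL (Fin n) k)), (∀ g ∈ l, g ∈ G) → ∀ z ∈ G,
      (l.map (fun g => g * z * g⁻¹)).prod ∈ G := by
    intro l
    induction l with
    | nil => intro _ z _; simpa using G.one_mem
    | cons a t ih =>
      intro hmem z hz
      rw [List.map_cons, List.prod_cons]
      exact mul_mem (hconjS a (hmem a List.mem_cons_self) z hz)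
        (ih (fun g hg => hmem g (List.mem_cons_of_mem a hg)) z hz)
  have hμprod : ∀ (l : List (GL (Fin n) k)), (∀ g ∈ l, g ∈ G) → ∀ z ∈ G,
      μ ((l.map (fun g => g * z * g⁻¹)).prod) = μ z ^ l.length := by
    intro l
    induction l with
    | nil => intro _ z _; simpa using hμ1
    | cons a t ih =>
      intro hmem z hz
      rw [List.map_cons, List.prod_cons]
      have ha := hmem a List.mem_cons_self
      rw [hmul _ (hconjS a ha z hz) _
          (hprod_memG t (fun g hg => hmem g (List.mem_cons_of_mem a hg)) z hz),
        hμconj a ha z hz,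
        ih (fun g hg => hmem g (List.mem_cons_of_mem a hg)) z hz,
        List.length_cons, pow_succ']
  -- invariance of Φ z under conjugation
  have hΦconj : ∀ z ∈ centerOf k (idComponent k S), ∀ h ∈ G, h * Φ z * h⁻¹ = Φ z := by
    intro z hz h hh
    have hcb : ∀ x : ↥S, (↑x : GL (Fin n) k) * z * (↑x)⁻¹ =
        rv (ConnectedComponents.mk x) * z * (rv (ConnectedComponents.mk x))⁻¹ := by
      intro x
      exact hconjcomp z hz x (r (ConnectedComponents.mk x)) (by rw [hrmk])
    set σ : ConnectedComponents (↥S) → ConnectedComponents (↥S) :=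
      fun c => ConnectedComponents.mk (⟨h * rv c, mul_mem hh (hrvS c)⟩ : ↥S) with hσdef
    set τ : ConnectedComponents (↥S) → ConnectedComponents (↥S) :=
      fun c => ConnectedComponents.mk (⟨h⁻¹ * rv c, mul_mem (inv_mem hh) (hrvS c)⟩ : ↥S)
      with hτdef
    have hτσ : ∀ c, τ (σ c) = c := by
      intro c
      calc τ (σ c)
          = ConnectedComponents.mk
            (⟨h⁻¹ * (h * rv c), mul_mem (inv_mem hh) (mul_mem hh (hrvS c))⟩ : ↥S) :=
          hdesc h⁻¹ (inv_mem hh) (r (σ c)) ⟨h * rv c, mul_mem hh (hrvS c)⟩ (hrmk (σ c))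
            (mul_mem (inv_mem hh) (hrvS (σ c)))
            (mul_mem (inv_mem hh) (mul_mem hh (hrvS c)))
        _ = ConnectedComponents.mk (r c) := by
            refine congrArg _ (Subtype.ext ?_)
            show h⁻¹ * (h * rv c) = ↑(r c)
            rw [inv_mul_cancel_left]
        _ = c := hrmk c
    have hστ : ∀ c, σ (τ c) = c := by
      intro c
      calc σ (τ c)
          = ConnectedComponents.mk
            (⟨h * (h⁻¹ * rv c), mul_mem hh (mul_mem (inv_mem hh) (hrvS c))⟩ : ↥S) :=
          hdesc h hh (r (τ c)) ⟨h⁻¹ * rv c, mul_mem (inv_mem hh) (hrvS c)⟩ (hrmk (τ c))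
            (mul_mem hh (hrvS (τ c)))
            (mul_mem hh (mul_mem (inv_mem hh) (hrvS c)))
        _ = ConnectedComponents.mk (r c) := by
            refine congrArg _ (Subtype.ext ?_)
            show h * (h⁻¹ * rv c) = ↑(r c)
            rw [mul_inv_cancel_left]
        _ = c := hrmk c
    have hσbij : Function.Bijective σ :=
      ⟨Function.LeftInverse.injective hτσ, Function.RightInverse.surjective hστ⟩
    show h * ((Lq.map rv).map (fun g => g * z * g⁻¹)).prod * h⁻¹
      = ((Lq.map rv).map (fun g => g * z * g⁻¹)).prod
    rw [hconj_list]
    have e2 : ((Lq.map rv).map (fun g => g * z * g⁻¹)).map (fun w => h * w * h⁻¹)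
        = Lq.map (((fun g => g * z * g⁻¹) ∘ rv) ∘ σ) := by
      rw [List.map_map, List.map_map]
      apply List.map_congr_left
      intro c _
      show h * (rv c * z * (rv c)⁻¹) * h⁻¹ = rv (σ c) * z * (rv (σ c))⁻¹
      have e3 : h * (rv c * z * (rv c)⁻¹) * h⁻¹ = (h * rv c) * z * (h * rv c)⁻¹ := by
        group
      rw [e3]
      exact hcb ⟨h * rv c, mul_mem hh (hrvS c)⟩
    rw [e2, List.map_map]
    have hperm : (Lq.map σ).Perm Lq := by
      apply Multiset.coe_eq_coe.mp
      have h8 : Finset.univ.image σ = Finset.univ :=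
        Finset.image_univ_of_surjective hσbij.2
      have h9 : (Finset.univ.image σ).val = Finset.univ.val.map σ :=
        Finset.image_val_of_injOn (hσbij.1.injOn)
      have hv : Multiset.map σ Finset.univ.val = Finset.univ.val :=
        h9.symm.trans (congrArg Finset.val h8)
      show Multiset.map σ (Lq : Multiset (ConnectedComponents ↥S)) = (Lq : Multiset _)
      have e1 : (Lq : Multiset (ConnectedComponents ↥S)) = Finset.univ.val :=
        Finset.coe_toList _
      rw [e1, hv]
    have hperm2 : (Lq.map (((fun g => g * z * g⁻¹) ∘ rv) ∘ σ)).Perm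
        (Lq.map ((fun g => g * z * g⁻¹) ∘ rv)) := by
      have h3 := hperm.map ((fun g => g * z * g⁻¹) ∘ rv)
      rw [List.map_map] at h3
      exact h3
    have hFmem : ∀ c, rv c * z * (rv c)⁻¹ ∈ centerOf k (idComponent k S) := fun c =>
      hconjZ (rv c) (hrvS c) z hz
    have hpair : (Lq.map (((fun g => g * z * g⁻¹) ∘ rv) ∘ σ)).Pairwise Commute := by
      apply List.pairwise_of_forall_mem_list
      intro a ha b hb
      rw [List.mem_map] at ha hb
      obtain ⟨c, -, rfl⟩ := ha
      obtain ⟨d, -, rfl⟩ := hb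
      exact (hFmem (σ c)).2 _ (hFmem (σ d)).1
    exact hperm2.prod_eq' hpair
  -- Φ maps the center of G⁰ into the center of G
  have hΦcent : ∀ z ∈ centerOf k (idComponent k S), Φ z ∈ centerOf k S := by
    intro z hz
    have hzG : z ∈ G := hG0S hz.1
    constructor
    · exact hprod_memG L hLmemG z hzG
    · intro h hh
      have h4 := hΦconj z hz h hh
      calc Φ z * h = (h * Φ z * h⁻¹) * h := by rw [h4]
        _ = h * Φ z := by group
  have hμΦ : ∀ z ∈ G, μ (Φ z) = μ z ^ L.length := fun z hz => hμprod L hLmemG z hz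
  have hNpos : 0 < L.length := by
    rw [hLdef, List.length_map, hLqdef, Finset.length_toList]
    exact Finset.card_pos.mpr Finset.univ_nonempty
  -- key power identity
  have key : ∀ z ∈ idComponent k (centerOf k (idComponent k S)), μ z ^ L.length = 1 := by
    intro z hzmem
    obtain ⟨hzs2, h1', hc⟩ := hzmem
    have hzG : z ∈ G := hG0S hzs2.1
    have hΦmem : Φ z ∈ idComponent k (centerOf k S) := by
      refine ⟨hΦcent z hzs2, h1ct, ?_⟩
      exact component_map' hΦcont (fun a ha => hΦcent a ha) hzs2 h1' hc rfl hΦ1 _ h1ct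
    have h0 := hcontra _ hΦmem
    rw [hμΦ z hzG] at h0
    exact h0
  -- the fibres of μ are closed
  have hval_eval : ∀ (a : k) (g : GL (Fin n) k), g ∈ G →
      (eval (glEmbedding k n g) (rename Sum.inl f - MvPolynomial.C a * detPoly n ^ m) = 0
        ↔ ((μ g : kˣ) : k) = a) := by
    intro a g hg
    rw [map_sub, _root_.map_mul, map_pow, eval_rename, detPoly_eval, eval_C]
    have hrw : (glEmbedding k n g ∘ Sum.inl)
        = fun q : Fin n × Fin n => (g : Matrix (Fin n) (Fin n) k) q.1 q.2 := rfl
    rw [hrw, ← hf g hg]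
    have hdne : ((g : Matrix (Fin n) (Fin n) k).det) ^ m ≠ 0 := by
      have hiu : IsUnit ((g : Matrix (Fin n) (Fin n) k).det) :=
        (Matrix.isUnit_iff_isUnit_det _).mp g.isUnit
      exact pow_ne_zero m hiu.ne_zero
    constructor
    · intro h0
      exact mul_right_cancel₀ hdne (sub_eq_zero.mp h0)
    · intro h0
      rw [h0]
      ring
  have hWclosed : ∀ a : k, IsClosed {x : ↥(centerOf k (idComponent k S)) |
      eval (glEmbedding k n ↑x) (rename Sum.inl f - MvPolynomial.C a * detPoly n ^ m) = 0} := by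
    intro a
    letI := zariskiTopology k ((Fin n × Fin n) ⊕ Unit)
    have h1 : Continuous ((glEmbedding k n) ∘
        (Subtype.val : ↥(centerOf k (idComponent k S)) → GL (Fin n) k)) :=
      Continuous.comp continuous_induced_dom continuous_subtype_val
    exact IsClosed.preimage h1
      (zariski_isClosed_basic (rename Sum.inl f - MvPolynomial.C a * detPoly n ^ m))
  -- roots of unity are finite
  -- the connected component of 1 in the center of G⁰
  obtain ⟨hz₀s2, h1'', hc₀⟩ := hz₀
  have hCpre : IsPreconnected
      (connectedComponent (⟨1, h1s2⟩ : ↥(centerOf k (idComponent k S)))) :=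
    isPreconnected_connectedComponent
  set A : Finset k := Polynomial.nthRootsFinset L.length (1 : k) with hAdef
  have hmemA : ∀ a : k, a ∈ A ↔ a ^ L.length = 1 := fun a =>
    Polynomial.mem_nthRootsFinset hNpos 1
  -- the cover of the connected component by fibres of μ
  have hxval : ∀ x : ↥(centerOf k (idComponent k S)),
      x ∈ connectedComponent (⟨1, h1s2⟩ : ↥(centerOf k (idComponent k S))) →
      ((μ ↑x : kˣ) : k) ^ L.length = 1 ∧ (↑x : GL (Fin n) k) ∈ G := by
    intro x hx
    have hxG : (↑x : GL (Fin n) k) ∈ G := hG0S x.2.1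
    have hxid : (↑x : GL (Fin n) k) ∈ idComponent k (centerOf k (idComponent k S)) :=
      ⟨x.2, h1s2, hx⟩
    have hpow := key _ hxid
    refine ⟨?_, hxG⟩
    have h5 := congrArg (Units.val) hpow
    rw [Units.val_pow_eq_pow_val, Units.val_one] at h5
    exact h5
  have hcover : connectedComponent (⟨1, h1s2⟩ : ↥(centerOf k (idComponent k S))) ⊆
      {x : ↥(centerOf k (idComponent k S)) |
        eval (glEmbedding k n ↑x) (rename Sum.inl f - MvPolynomial.C 1 * detPoly n ^ m) = 0} ∪
      (⋃ a ∈ A.erase 1, {x : ↥(centerOf k (idComponent k S)) |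
        eval (glEmbedding k n ↑x) (rename Sum.inl f - MvPolynomial.C a * detPoly n ^ m) = 0}) := by
    intro x hx
    obtain ⟨hpowk, hxG⟩ := hxval x hx
    by_cases h1x : ((μ ↑x : kˣ) : k) = 1
    · left
      exact (hval_eval 1 ↑x hxG).mpr h1x
    · right
      refine Set.mem_biUnion ?_ ((hval_eval _ ↑x hxG).mpr rfl)
      exact Finset.mem_erase.mpr ⟨h1x, (hmemA _).mpr hpowk⟩
  have hUclosed : IsClosed (⋃ a ∈ A.erase 1, {x : ↥(centerOf k (idComponent k S)) |
      eval (glEmbedding k n ↑x) (rename Sum.inl f - MvPolynomial.C a * detPoly n ^ m) = 0}) :=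
    isClosed_biUnion_finset (fun a _ => hWclosed a)
  have h1mem : (⟨1, h1s2⟩ : ↥(centerOf k (idComponent k S))) ∈
      connectedComponent (⟨1, h1s2⟩ : ↥(centerOf k (idComponent k S))) :=
    mem_connectedComponent
  have h1fib : (⟨1, h1s2⟩ : ↥(centerOf k (idComponent k S))) ∈
      {x : ↥(centerOf k (idComponent k S)) |
        eval (glEmbedding k n ↑x) (rename Sum.inl f - MvPolynomial.C 1 * detPoly n ^ m) = 0} := by
    refine (hval_eval 1 1 G.one_mem).mpr ?_
    rw [hμ1, Units.val_one]
  -- final contradiction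
  by_cases hne : (connectedComponent (⟨1, h1s2⟩ : ↥(centerOf k (idComponent k S))) ∩
      (⋃ a ∈ A.erase 1, {x : ↥(centerOf k (idComponent k S)) |
        eval (glEmbedding k n ↑x) (rename Sum.inl f - MvPolynomial.C a * detPoly n ^ m)
          = 0})).Nonempty
  · obtain ⟨x, -, hx1, hxU⟩ := (isPreconnected_closed_iff.mp hCpre) _ _
      (hWclosed 1) hUclosed hcover ⟨_, h1mem, h1fib⟩ hne
    have hxG : (↑x : GL (Fin n) k) ∈ G := hG0S x.2.1
    have hv1 : ((μ ↑x : kˣ) : k) = 1 := (hval_eval 1 ↑x hxG).mp hx1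
    obtain ⟨a, haA, hxa⟩ := Set.mem_iUnion₂.mp hxU
    have hva : ((μ ↑x : kˣ) : k) = a := (hval_eval a ↑x hxG).mp hxa
    exact absurd (hv1 ▸ hva).symm (Finset.mem_erase.mp haA).1
  · have hz₀C : (⟨z₀, hz₀s2⟩ : ↥(centerOf k (idComponent k S))) ∈
        connectedComponent (⟨1, h1s2⟩ : ↥(centerOf k (idComponent k S))) := hc₀
    have hz₀fib := hcover hz₀C
    have hz₀G : z₀ ∈ G := hG0S hz₀s2.1
    cases hz₀fib with
    | inl h6 =>
      have : ((μ z₀ : kˣ) : k) = 1 := (hval_eval 1 z₀ hz₀G).mp h6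
      exact hz₀ne (Units.ext (by rw [this, Units.val_one]))
    | inr h6 =>
      exact hne ⟨_, hz₀C, h6⟩
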